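/- arXiv:2006.13271 — 2 statements merged into one kernel-verified Lean document; each statement's English description precedes it below -/
import Mathlib

section
/- The ring A is a free ℂ[t]-module with basis consisting of: the element 1, the elements z̄₁ⁿ for n ≥ 1, the elements z̄₂ⁿ for n ≥ 1, the elements z̄₁ⁿθ̄₁ for n ≥ 0, and the elements z̄₂ⁿθ̄₂ for n ≥ 0. -/
open MvPolynomial

noncomputable section
set_option maxHeartbeats 1000000
set_option synthInstance.maxHeartbeats 400000
open TrivSqZeroExt

/-- The polynomial ring `ℂ[t,z₁,z₂,θ₁,θ₂]`:
variables `X 0 = t`, `X 1 = z₁`, `X 2 = z₂`, `X 3 = θ₁`, `X 4 = θ₂`. -/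
abbrev P5 : Type := MvPolynomial (Fin 5) ℂ

/-- The ideal `(z₁z₂ + t², z₁θ₂ − tθ₁, z₂θ₁ + tθ₂, θ₁θ₂, θ₁², θ₂²)` of relations
of Deligne's miniversal deformation of the NS node. -/
def nsIdeal : Ideal P5 :=
  Ideal.span {X 1 * X 2 + X 0 ^ 2, X 1 * X 4 - X 0 * X 3, X 2 * X 3 + X 0 * X 4,
    X 3 * X 4, X 3 ^ 2, X 4 ^ 2}

/-- The coordinate ring `A` of Deligne's miniversal deformation of the NS node. -/
abbrev ANode : Type := P5 ⧸ nsIdeal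

/-- `t̄ ∈ A`. -/
def tb : ANode := Ideal.Quotient.mk nsIdeal (X 0)
/-- `z̄₁ ∈ A`. -/
def z1 : ANode := Ideal.Quotient.mk nsIdeal (X 1)
/-- `z̄₂ ∈ A`. -/
def z2 : ANode := Ideal.Quotient.mk nsIdeal (X 2)
/-- `θ̄₁ ∈ A`. -/
def th1 : ANode := Ideal.Quotient.mk nsIdeal (X 3)
/-- `θ̄₂ ∈ A`. -/
def th2 : ANode := Ideal.Quotient.mk nsIdeal (X 4)

/-- `A` as a `ℂ[t]`-algebra via `t ↦ t̄`. -/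
instance : Algebra (Polynomial ℂ) ANode := (Polynomial.aeval tb).toRingHom.toAlgebra


/-- Index type for the `ℂ[t]`-basis: `1`; `z̄₁ⁿ (n ≥ 1)`; `z̄₂ⁿ (n ≥ 1)`;
`z̄₁ⁿθ̄₁ (n ≥ 0)`; `z̄₂ⁿθ̄₂ (n ≥ 0)`. -/
abbrev BasisIdx : Type := Unit ⊕ ℕ ⊕ ℕ ⊕ ℕ ⊕ ℕ

/-- The claimed `ℂ[t]`-basis of `A`. -/
def aBasis : BasisIdx → ANode
  | Sum.inl _ => 1
  | Sum.inr (Sum.inl n) => z1 ^ (n + 1)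
  | Sum.inr (Sum.inr (Sum.inl n)) => z2 ^ (n + 1)
  | Sum.inr (Sum.inr (Sum.inr (Sum.inl n))) => z1 ^ n * th1
  | Sum.inr (Sum.inr (Sum.inr (Sum.inr n))) => z2 ^ n * th2


/-! ### the model -/
abbrev Q2 : Type := MvPolynomial (Fin 2) ℂ
abbrev DD : Type := DualNumber Q2
def Xa : Q2 := X 0
def Xb : Q2 := X 1
def vmap : Fin 5 → DD := ![inl (Xa*Xb), inl (Xa^2), inl (-(Xb^2)), inr Xa, inr Xb]
def ψ0 : P5 →ₐ[ℂ] DD := MvPolynomial.aeval vmap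

lemma ψ0_X : ∀ i, ψ0 (X i) = vmap i := fun i => aeval_X _ i

lemma gens_zero : ∀ a ∈ nsIdeal, ψ0 a = 0 := by
  have : nsIdeal ≤ RingHom.ker ψ0.toRingHom := by
    rw [nsIdeal, Ideal.span_le]
    rintro p hp
    simp only [Set.mem_insert_iff, Set.mem_singleton_iff] at hp
    rcases hp with h|h|h|h|h|h <;> subst h <;>
      refine RingHom.mem_ker.mpr ?_
    · show ψ0 (X 1 * X 2 + X 0 ^ 2) = 0
      rw [map_add, map_mul, map_pow, ψ0_X, ψ0_X, ψ0_X]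
      show (inl (Xa^2) : DD) * inl (-(Xb^2)) + inl (Xa*Xb)^2 = 0
      rw [← inl_mul, inl_pow, ← inl_add,
        show Xa ^ 2 * -Xb ^ 2 + (Xa * Xb)^2 = 0 by ring, inl_zero]
    · show ψ0 (X 1 * X 4 - X 0 * X 3) = 0
      rw [map_sub, map_mul, map_mul, ψ0_X, ψ0_X, ψ0_X, ψ0_X]
      show (inl (Xa^2) : DD) * inr Xb - inl (Xa*Xb) * inr Xa = 0
      rw [inl_mul_inr, inl_mul_inr, smul_eq_mul, smul_eq_mul, ← inr_sub,
        show Xa ^ 2 * Xb - Xa * Xb * Xa = 0 by ring, inr_zero]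
    · show ψ0 (X 2 * X 3 + X 0 * X 4) = 0
      rw [map_add, map_mul, map_mul, ψ0_X, ψ0_X, ψ0_X, ψ0_X]
      show (inl (-(Xb^2)) : DD) * inr Xa + inl (Xa*Xb) * inr Xb = 0
      rw [inl_mul_inr, inl_mul_inr, smul_eq_mul, smul_eq_mul, ← inr_add,
        show -Xb ^ 2 * Xa + Xa * Xb * Xb = 0 by ring, inr_zero]
    · show ψ0 (X 3 * X 4) = 0
      rw [map_mul, ψ0_X, ψ0_X]
      exact inr_mul_inr _ _ _
    · show ψ0 (X 3 ^ 2) = 0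
      rw [map_pow, ψ0_X, sq]
      exact inr_mul_inr _ _ _
    · show ψ0 (X 4 ^ 2) = 0
      rw [map_pow, ψ0_X, sq]
      exact inr_mul_inr _ _ _
  exact fun a ha => this ha

def ψ : ANode →ₐ[ℂ] DD := Ideal.Quotient.liftₐ nsIdeal ψ0 gens_zero

lemma ψ_mk (p : P5) : ψ (Ideal.Quotient.mk nsIdeal p) = ψ0 p := rfl

instance : Algebra (Polynomial ℂ) DD := (Polynomial.aeval (inl (Xa*Xb) : DD)).toRingHom.toAlgebra

lemma psi_tb : ψ tb = inl (Xa*Xb) := ψ0_X 0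

def ψℓ : ANode →ₗ[Polynomial ℂ] DD where
  toFun := ψ
  map_add' := map_add ψ
  map_smul' := by
    intro p x
    show ψ ((Polynomial.aeval tb) p * x) = (Polynomial.aeval (inl (Xa*Xb) : DD)) p * ψ x
    rw [map_mul]
    congr 1
    rw [← psi_tb, Polynomial.aeval_algHom_apply]

/-! ### exponent bookkeeping -/
def e2 (i j : ℕ) : Fin 2 →₀ ℕ := Finsupp.single 0 i + Finsupp.single 1 j
def delta (p : Polynomial ℂ) : Q2 := Polynomial.aeval (Xa*Xb) p

lemma e2_apply0 (i j : ℕ) : e2 i j 0 = i := by simp [e2]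
lemma e2_apply1 (i j : ℕ) : e2 i j 1 = j := by simp [e2, Finsupp.single_apply]

lemma e2_le {i j k l : ℕ} : e2 k l ≤ e2 i j ↔ k ≤ i ∧ l ≤ j := by
  rw [Finsupp.le_def]
  constructor
  · intro h
    exact ⟨by simpa [e2_apply0] using h 0, by simpa [e2_apply1] using h 1⟩
  · rintro ⟨h1, h2⟩ s
    fin_cases s <;> simpa [e2_apply0, e2_apply1]

lemma e2_sub (i j k l : ℕ) : e2 i j - e2 k l = e2 (i-k) (j-l) := by
  ext s
  fin_cases s <;> simp [Finsupp.tsub_apply, e2_apply0, e2_apply1]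

lemma e2_inj {i j k l : ℕ} : e2 i j = e2 k l ↔ i = k ∧ j = l := by
  constructor
  · intro h
    exact ⟨by rw [← e2_apply0 i j, h, e2_apply0], by rw [← e2_apply1 i j, h, e2_apply1]⟩
  · rintro ⟨rfl, rfl⟩; rfl

lemma e2_add (i j k l : ℕ) : e2 i j + e2 k l = e2 (i+k) (j+l) := by
  ext s
  fin_cases s <;> simp [Finsupp.add_apply, e2_apply0, e2_apply1]

lemma e2_r0 (m : ℕ) : e2 m 0 = Finsupp.single 0 m := by simp [e2]
lemma e2_0r (m : ℕ) : e2 0 m = Finsupp.single 1 m := by simp [e2]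

lemma xaxb_pow (n : ℕ) : (Xa * Xb) ^ n = monomial (e2 n n) 1 := by
  rw [mul_pow, Xa, Xb, X_pow_eq_monomial, X_pow_eq_monomial, monomial_mul, e2, one_mul]

lemma coeff_delta (a b : ℕ) (p : Polynomial ℂ) :
    coeff (e2 a b) (delta p) = if a = b then p.coeff a else 0 := by
  induction p using Polynomial.induction_on' with
  | add f g hf hg =>
    rw [delta, map_add, coeff_add, ← delta, ← delta, hf, hg, Polynomial.coeff_add]
    split_ifs <;> simp
  | monomial n c =>
    rw [delta, Polynomial.aeval_monomial, xaxb_pow, Polynomial.coeff_monomial]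
    have : (algebraMap ℂ Q2) c * monomial (e2 n n) 1 = monomial (e2 n n) c := by
      rw [MvPolynomial.algebraMap_eq, C_mul_monomial, mul_one]
    rw [this, coeff_monomial]
    by_cases h1 : e2 n n = e2 a b
    · obtain ⟨rfl, rfl⟩ := e2_inj.mp h1
      simp
    · rw [if_neg h1]
      rw [e2_inj, not_and_or] at h1
      split_ifs with h2 h3
      · exfalso; subst h2; rcases h1 with h|h <;> simp_all
      · rfl
      · rfl

lemma coeff_dm (p : Polynomial ℂ) (i j k l : ℕ) (u : ℂ) :
    coeff (e2 i j) (delta p * monomial (e2 k l) u) =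
      if k ≤ i ∧ l ≤ j ∧ i - k = j - l then p.coeff (i - k) * u else 0 := by
  rw [coeff_mul_monomial', e2_sub]
  by_cases h : (e2 k l : Fin 2 →₀ ℕ) ≤ e2 i j
  · rw [if_pos h, coeff_delta]
    obtain ⟨h1, h2⟩ := e2_le.mp h
    by_cases h3 : i - k = j - l
    · rw [if_pos h3, if_pos ⟨h1, h2, h3⟩]
    · rw [if_neg h3, if_neg (by tauto), zero_mul]
  · rw [if_neg h, if_neg (by rw [e2_le] at h; tauto)]

/-! ### images of the basis -/
lemma psi_b1 (u : Unit) : ψ (aBasis (Sum.inl u)) = inl (monomial (e2 0 0) 1) := by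
  have h : monomial (e2 0 0) (1:ℂ) = (1:Q2) := by
    have : e2 0 0 = 0 := by simp [e2]
    rw [this, monomial_zero', C_1]
  rw [h, aBasis, map_one, inl_one]

lemma psi_z1 : ψ z1 = inl (Xa^2) := ψ0_X 1
lemma psi_z2 : ψ z2 = inl (-(Xb^2)) := ψ0_X 2
lemma psi_th1 : ψ th1 = inr Xa := ψ0_X 3
lemma psi_th2 : ψ th2 = inr Xb := ψ0_X 4

lemma xa_pow (m : ℕ) : Xa ^ m = monomial (e2 m 0) 1 := by
  rw [Xa, X_pow_eq_monomial, e2_r0]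
lemma xb_pow (m : ℕ) : Xb ^ m = monomial (e2 0 m) 1 := by
  rw [Xb, X_pow_eq_monomial, e2_0r]

lemma neg_xb_sq_pow (m : ℕ) : (-(Xb^2)) ^ m = monomial (e2 0 (2*m)) ((-1)^m) := by
  rw [neg_pow, ← pow_mul, xb_pow, show (-1 : Q2)^m = C ((-1:ℂ)^m) by rw [map_pow, map_neg, C_1],
    C_mul_monomial, mul_one]

lemma psi_b2 (n : ℕ) : ψ (aBasis (Sum.inr (Sum.inl n))) = inl (monomial (e2 (2*n+2) 0) 1) := by
  rw [aBasis, map_pow, psi_z1, inl_pow, ← pow_mul, show 2*(n+1) = 2*n+2 by ring, xa_pow]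

lemma psi_b3 (n : ℕ) :
    ψ (aBasis (Sum.inr (Sum.inr (Sum.inl n)))) = inl (monomial (e2 0 (2*n+2)) ((-1:ℂ)^(n+1))) := by
  rw [aBasis, map_pow, psi_z2, inl_pow, neg_xb_sq_pow, show 2*(n+1) = 2*n+2 by ring]

lemma psi_b4 (n : ℕ) :
    ψ (aBasis (Sum.inr (Sum.inr (Sum.inr (Sum.inl n))))) = inr (monomial (e2 (2*n+1) 0) 1) := by
  rw [aBasis, map_mul, map_pow, psi_z1, psi_th1, inl_pow, inl_mul_inr, smul_eq_mul, ← pow_mul]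
  rw [show Xa ^ (2*n) * Xa = Xa ^ (2*n+1) by ring, xa_pow]

lemma psi_b5 (n : ℕ) :
    ψ (aBasis (Sum.inr (Sum.inr (Sum.inr (Sum.inr n))))) = inr (monomial (e2 0 (2*n+1)) ((-1:ℂ)^n)) := by
  rw [aBasis, map_mul, map_pow, psi_z2, psi_th2, inl_pow, inl_mul_inr, smul_eq_mul, neg_xb_sq_pow]
  congr 1
  rw [show Xb = monomial (e2 0 1) (1:ℂ) by rw [← xb_pow, pow_one], monomial_mul, mul_one]
  congr 1
  rw [e2_add]
/-! ### linear independence -/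
def fstA : DD →+ Q2 := { toFun := fst, map_zero' := rfl, map_add' := fun _ _ => rfl }
def sndA : DD →+ Q2 := { toFun := snd, map_zero' := rfl, map_add' := fun _ _ => rfl }

lemma smul_psi (p : Polynomial ℂ) (d : DD) : p • d = inl (delta p) * d := by
  show (Polynomial.aeval (inl (Xa*Xb) : DD)) p * d = inl (delta p) * d
  congr 1
  rw [delta]
  exact Polynomial.aeval_algHom_apply (inlAlgHom ℂ Q2 Q2) (Xa*Xb) p

lemma li_comp : LinearIndependent (Polynomial ℂ) (ψℓ ∘ aBasis) := by
  rw [linearIndependent_iff']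
  intro s c H α₀ hα₀
  have H2 : ∑ α ∈ s, inl (delta (c α)) * ψ (aBasis α) = (0:DD) := by
    rw [← H]
    exact (Finset.sum_congr rfl fun α _ => (smul_psi (c α) _).symm)
  have HE : ∑ α ∈ s, delta (c α) * fst (ψ (aBasis α)) = 0 := by
    have h2 := congrArg fstA H2
    rw [map_sum] at h2
    change ∑ x ∈ s, fst (inl (delta (c x)) * ψ (aBasis x)) = 0 at h2
    simpa only [fstA, AddMonoidHom.coe_mk, ZeroHom.coe_mk, fst_mul, fst_inl, map_zero] using h2
  have HO : ∑ α ∈ s, delta (c α) * snd (ψ (aBasis α)) = 0 := by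
    have h2 := congrArg sndA H2
    rw [map_sum] at h2
    change ∑ x ∈ s, snd (inl (delta (c x)) * ψ (aBasis x)) = 0 at h2
    simpa only [sndA, AddMonoidHom.coe_mk, ZeroHom.coe_mk, snd_mul, snd_inl, fst_inl,
      smul_zero, add_zero, smul_eq_mul, map_zero] using h2
  apply Polynomial.ext; intro k
  rw [Polynomial.coeff_zero]
  rcases α₀ with u | n | n | n | n
  · have h0 := congrArg (coeff (e2 k k)) HE
    have hother : ∀ β ∈ s, β ≠ Sum.inl u →
        coeff (e2 k k) (delta (c β) * fst (ψ (aBasis β))) = 0 := by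
      rintro (v | m | m | m | m) hβ hne
      · cases v; cases u; exact absurd rfl hne
      · rw [psi_b2, fst_inl, coeff_dm, if_neg (by omega)]
      · rw [psi_b3, fst_inl, coeff_dm, if_neg (by omega)]
      · rw [psi_b4, fst_inr, mul_zero, coeff_zero]
      · rw [psi_b5, fst_inr, mul_zero, coeff_zero]
    rw [coeff_sum, coeff_zero, Finset.sum_eq_single_of_mem _ hα₀ hother, psi_b1, fst_inl,
      coeff_dm, if_pos ⟨Nat.zero_le _, Nat.zero_le _, rfl⟩, mul_one] at h0
    simpa using h0
  · have h0 := congrArg (coeff (e2 (2*n+2+k) k)) HE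
    have hother : ∀ β ∈ s, β ≠ Sum.inr (Sum.inl n) →
        coeff (e2 (2*n+2+k) k) (delta (c β) * fst (ψ (aBasis β))) = 0 := by
      rintro (v | m | m | m | m) hβ hne
      · rw [psi_b1, fst_inl, coeff_dm, if_neg (by omega)]
      · have hmn : m ≠ n := by simpa using hne
        rw [psi_b2, fst_inl, coeff_dm, if_neg (by omega)]
      · rw [psi_b3, fst_inl, coeff_dm, if_neg (by omega)]
      · rw [psi_b4, fst_inr, mul_zero, coeff_zero]
      · rw [psi_b5, fst_inr, mul_zero, coeff_zero]
    rw [coeff_sum, coeff_zero, Finset.sum_eq_single_of_mem _ hα₀ hother, psi_b2, fst_inl,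
      coeff_dm, if_pos (by omega : 2*n+2 ≤ 2*n+2+k ∧ 0 ≤ k ∧ 2*n+2+k - (2*n+2) = k - 0),
      mul_one] at h0
    simpa [show 2*n+2+k - (2*n+2) = k by omega] using h0
  · have h0 := congrArg (coeff (e2 k (2*n+2+k))) HE
    have hother : ∀ β ∈ s, β ≠ Sum.inr (Sum.inr (Sum.inl n)) →
        coeff (e2 k (2*n+2+k)) (delta (c β) * fst (ψ (aBasis β))) = 0 := by
      rintro (v | m | m | m | m) hβ hne
      · rw [psi_b1, fst_inl, coeff_dm, if_neg (by omega)]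
      · rw [psi_b2, fst_inl, coeff_dm, if_neg (by omega)]
      · have hmn : m ≠ n := by simpa using hne
        rw [psi_b3, fst_inl, coeff_dm, if_neg (by omega)]
      · rw [psi_b4, fst_inr, mul_zero, coeff_zero]
      · rw [psi_b5, fst_inr, mul_zero, coeff_zero]
    rw [coeff_sum, coeff_zero, Finset.sum_eq_single_of_mem _ hα₀ hother, psi_b3, fst_inl,
      coeff_dm, if_pos (by omega : 0 ≤ k ∧ 2*n+2 ≤ 2*n+2+k ∧ k - 0 = 2*n+2+k - (2*n+2))] at h0
    have hne1 : ((-1:ℂ))^(n+1) ≠ 0 := pow_ne_zero _ (by norm_num)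
    have := mul_eq_zero.mp h0
    simpa [hne1] using this
  · have h0 := congrArg (coeff (e2 (2*n+1+k) k)) HO
    have hother : ∀ β ∈ s, β ≠ Sum.inr (Sum.inr (Sum.inr (Sum.inl n))) →
        coeff (e2 (2*n+1+k) k) (delta (c β) * snd (ψ (aBasis β))) = 0 := by
      rintro (v | m | m | m | m) hβ hne
      · rw [psi_b1, snd_inl, mul_zero, coeff_zero]
      · rw [psi_b2, snd_inl, mul_zero, coeff_zero]
      · rw [psi_b3, snd_inl, mul_zero, coeff_zero]
      · have hmn : m ≠ n := by simpa using hne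
        rw [psi_b4, snd_inr, coeff_dm, if_neg (by omega)]
      · rw [psi_b5, snd_inr, coeff_dm, if_neg (by omega)]
    rw [coeff_sum, coeff_zero, Finset.sum_eq_single_of_mem _ hα₀ hother, psi_b4, snd_inr,
      coeff_dm, if_pos (by omega : 2*n+1 ≤ 2*n+1+k ∧ 0 ≤ k ∧ 2*n+1+k - (2*n+1) = k - 0),
      mul_one] at h0
    simpa [show 2*n+1+k - (2*n+1) = k by omega] using h0
  · have h0 := congrArg (coeff (e2 k (2*n+1+k))) HO
    have hother : ∀ β ∈ s, β ≠ Sum.inr (Sum.inr (Sum.inr (Sum.inr n))) →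
        coeff (e2 k (2*n+1+k)) (delta (c β) * snd (ψ (aBasis β))) = 0 := by
      rintro (v | m | m | m | m) hβ hne
      · rw [psi_b1, snd_inl, mul_zero, coeff_zero]
      · rw [psi_b2, snd_inl, mul_zero, coeff_zero]
      · rw [psi_b3, snd_inl, mul_zero, coeff_zero]
      · rw [psi_b4, snd_inr, coeff_dm, if_neg (by omega)]
      · have hmn : m ≠ n := by simpa using hne
        rw [psi_b5, snd_inr, coeff_dm, if_neg (by omega)]
    rw [coeff_sum, coeff_zero, Finset.sum_eq_single_of_mem _ hα₀ hother, psi_b5, snd_inr,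
      coeff_dm, if_pos (by omega : 0 ≤ k ∧ 2*n+1 ≤ 2*n+1+k ∧ k - 0 = 2*n+1+k - (2*n+1))] at h0
    have hne1 : ((-1:ℂ))^n ≠ 0 := pow_ne_zero _ (by norm_num)
    have := mul_eq_zero.mp h0
    simpa [hne1] using this

lemma aBasis_li : LinearIndependent (Polynomial ℂ) aBasis :=
  LinearIndependent.of_comp ψℓ li_comp
/-! ### relations in ANode -/
lemma mk_gen_zero (p : P5)
    (hp : p ∈ ({X 1 * X 2 + X 0 ^ 2, X 1 * X 4 - X 0 * X 3, X 2 * X 3 + X 0 * X 4,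
      X 3 * X 4, X 3 ^ 2, X 4 ^ 2} : Set P5)) :
    Ideal.Quotient.mk nsIdeal p = 0 :=
  Ideal.Quotient.eq_zero_iff_mem.mpr (Ideal.subset_span hp)

lemma rel_z : z1 * z2 = -(tb^2) := by
  have h := mk_gen_zero (X 1 * X 2 + X 0 ^ 2) (by simp)
  rw [map_add, map_mul, map_pow] at h
  rw [z1, z2, tb]
  linear_combination h

lemma rel_1 : z1 * th2 = tb * th1 := by
  have h := mk_gen_zero (X 1 * X 4 - X 0 * X 3) (by simp)
  rw [map_sub, map_mul, map_mul] at h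
  rw [z1, th2, tb, th1]
  linear_combination h

lemma rel_2 : z2 * th1 = -(tb * th2) := by
  have h := mk_gen_zero (X 2 * X 3 + X 0 * X 4) (by simp)
  rw [map_add, map_mul, map_mul] at h
  rw [z2, th1, tb, th2]
  linear_combination h

lemma rel_3 : th1 * th2 = 0 := by
  have h := mk_gen_zero (X 3 * X 4) (by simp)
  rw [map_mul] at h
  rw [th1, th2]
  linear_combination h

lemma rel_4 : th1 * th1 = 0 := by
  have h := mk_gen_zero (X 3 ^ 2) (by simp)
  rw [map_pow] at h
  rw [th1]
  linear_combination h

lemma rel_5 : th2 * th2 = 0 := by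
  have h := mk_gen_zero (X 4 ^ 2) (by simp)
  rw [map_pow] at h
  rw [th2]
  linear_combination h

/-! ### spanning -/
def S : Submodule (Polynomial ℂ) ANode := Submodule.span (Polynomial ℂ) (Set.range aBasis)

lemma smul_eq' (p : Polynomial ℂ) (x : ANode) : p • x = Polynomial.aeval tb p * x := rfl

lemma basis_mem (α : BasisIdx) : aBasis α ∈ S := Submodule.subset_span ⟨α, rfl⟩

lemma smul_basis_mem (p : Polynomial ℂ) (α : BasisIdx) :
    Polynomial.aeval tb p * aBasis α ∈ S := by
  rw [← smul_eq']
  exact Submodule.smul_mem _ _ (basis_mem α)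

lemma aeval_negXsq : Polynomial.aeval tb (-(Polynomial.X^2) : Polynomial ℂ) = -(tb^2) := by simp
lemma aeval_X' : Polynomial.aeval tb (Polynomial.X : Polynomial ℂ) = tb := by simp
lemma aeval_negX : Polynomial.aeval tb (-Polynomial.X : Polynomial ℂ) = -tb := by simp

lemma mul_gen_mem : ∀ i : Fin 5, ∀ x ∈ S, (Ideal.Quotient.mk nsIdeal (X i)) * x ∈ S := by
  intro i x hx
  induction hx using Submodule.span_induction with
  | zero => rw [mul_zero]; exact Submodule.zero_mem _
  | add y z _ _ hy hz => rw [mul_add]; exact Submodule.add_mem _ hy hz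
  | smul p y _ hy => rw [mul_smul_comm]; exact Submodule.smul_mem _ _ hy
  | mem y hy =>
    obtain ⟨α, rfl⟩ := hy
    fin_cases i
    · -- t
      show tb * aBasis α ∈ S
      rw [← aeval_X', ← smul_eq']
      exact Submodule.smul_mem _ _ (basis_mem α)
    · -- z1
      show z1 * aBasis α ∈ S
      rcases α with u | n | n | n | n
      · rw [show z1 * aBasis (Sum.inl u) = aBasis (Sum.inr (Sum.inl 0)) by
          simp [aBasis]]
        exact basis_mem _
      · rw [show z1 * aBasis (Sum.inr (Sum.inl n)) = aBasis (Sum.inr (Sum.inl (n+1))) by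
          simp [aBasis]; ring]
        exact basis_mem _
      · rcases n with _ | m
        · rw [show z1 * aBasis (Sum.inr (Sum.inr (Sum.inl 0))) =
              Polynomial.aeval tb (-(Polynomial.X^2)) * aBasis (Sum.inl ()) by
            rw [aeval_negXsq]; simp [aBasis]; linear_combination rel_z]
          exact smul_basis_mem _ _
        · rw [show z1 * aBasis (Sum.inr (Sum.inr (Sum.inl (m+1)))) =
              Polynomial.aeval tb (-(Polynomial.X^2)) * aBasis (Sum.inr (Sum.inr (Sum.inl m))) by
            rw [aeval_negXsq]; simp [aBasis]; linear_combination (z2^(m+1)) * rel_z]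
          exact smul_basis_mem _ _
      · rw [show z1 * aBasis (Sum.inr (Sum.inr (Sum.inr (Sum.inl n)))) =
            aBasis (Sum.inr (Sum.inr (Sum.inr (Sum.inl (n+1))))) by
          simp [aBasis]; ring]
        exact basis_mem _
      · rcases n with _ | m
        · rw [show z1 * aBasis (Sum.inr (Sum.inr (Sum.inr (Sum.inr 0)))) =
              Polynomial.aeval tb Polynomial.X * aBasis (Sum.inr (Sum.inr (Sum.inr (Sum.inl 0)))) by
            rw [aeval_X']; simp [aBasis]; linear_combination rel_1]
          exact smul_basis_mem _ _
        · rw [show z1 * aBasis (Sum.inr (Sum.inr (Sum.inr (Sum.inr (m+1))))) =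
              Polynomial.aeval tb (-(Polynomial.X^2)) * aBasis (Sum.inr (Sum.inr (Sum.inr (Sum.inr m)))) by
            rw [aeval_negXsq]; simp [aBasis]; linear_combination (z2^m * th2) * rel_z]
          exact smul_basis_mem _ _
    · -- z2
      show z2 * aBasis α ∈ S
      rcases α with u | n | n | n | n
      · rw [show z2 * aBasis (Sum.inl u) = aBasis (Sum.inr (Sum.inr (Sum.inl 0))) by
          simp [aBasis]]
        exact basis_mem _
      · rcases n with _ | m
        · rw [show z2 * aBasis (Sum.inr (Sum.inl 0)) =
              Polynomial.aeval tb (-(Polynomial.X^2)) * aBasis (Sum.inl ()) by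
            rw [aeval_negXsq]; simp [aBasis]; linear_combination rel_z]
          exact smul_basis_mem _ _
        · rw [show z2 * aBasis (Sum.inr (Sum.inl (m+1))) =
              Polynomial.aeval tb (-(Polynomial.X^2)) * aBasis (Sum.inr (Sum.inl m)) by
            rw [aeval_negXsq]; simp [aBasis]; linear_combination (z1^(m+1)) * rel_z]
          exact smul_basis_mem _ _
      · rw [show z2 * aBasis (Sum.inr (Sum.inr (Sum.inl n))) =
            aBasis (Sum.inr (Sum.inr (Sum.inl (n+1)))) by
          simp [aBasis]; ring]
        exact basis_mem _
      · rcases n with _ | m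
        · rw [show z2 * aBasis (Sum.inr (Sum.inr (Sum.inr (Sum.inl 0)))) =
              Polynomial.aeval tb (-Polynomial.X) * aBasis (Sum.inr (Sum.inr (Sum.inr (Sum.inr 0)))) by
            rw [aeval_negX]; simp [aBasis]; linear_combination rel_2]
          exact smul_basis_mem _ _
        · rw [show z2 * aBasis (Sum.inr (Sum.inr (Sum.inr (Sum.inl (m+1))))) =
              Polynomial.aeval tb (-(Polynomial.X^2)) * aBasis (Sum.inr (Sum.inr (Sum.inr (Sum.inl m)))) by
            rw [aeval_negXsq]; simp [aBasis]; linear_combination (z1^m * th1) * rel_z]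
          exact smul_basis_mem _ _
      · rw [show z2 * aBasis (Sum.inr (Sum.inr (Sum.inr (Sum.inr n)))) =
            aBasis (Sum.inr (Sum.inr (Sum.inr (Sum.inr (n+1))))) by
          simp [aBasis]; ring]
        exact basis_mem _
    · -- th1
      show th1 * aBasis α ∈ S
      rcases α with u | n | n | n | n
      · rw [show th1 * aBasis (Sum.inl u) = aBasis (Sum.inr (Sum.inr (Sum.inr (Sum.inl 0)))) by
          simp [aBasis]]
        exact basis_mem _
      · rw [show th1 * aBasis (Sum.inr (Sum.inl n)) =
            aBasis (Sum.inr (Sum.inr (Sum.inr (Sum.inl (n+1))))) by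
          simp [aBasis]; ring]
        exact basis_mem _
      · rw [show th1 * aBasis (Sum.inr (Sum.inr (Sum.inl n))) =
            Polynomial.aeval tb (-Polynomial.X) * aBasis (Sum.inr (Sum.inr (Sum.inr (Sum.inr n)))) by
          rw [aeval_negX]; simp [aBasis]; linear_combination (z2^n) * rel_2]
        exact smul_basis_mem _ _
      · rw [show th1 * aBasis (Sum.inr (Sum.inr (Sum.inr (Sum.inl n)))) = 0 by
          simp [aBasis]; linear_combination (z1^n) * rel_4]
        exact Submodule.zero_mem _
      · rw [show th1 * aBasis (Sum.inr (Sum.inr (Sum.inr (Sum.inr n)))) = 0 by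
          simp [aBasis]; linear_combination (z2^n) * rel_3]
        exact Submodule.zero_mem _
    · -- th2
      show th2 * aBasis α ∈ S
      rcases α with u | n | n | n | n
      · rw [show th2 * aBasis (Sum.inl u) = aBasis (Sum.inr (Sum.inr (Sum.inr (Sum.inr 0)))) by
          simp [aBasis]]
        exact basis_mem _
      · rw [show th2 * aBasis (Sum.inr (Sum.inl n)) =
            Polynomial.aeval tb Polynomial.X * aBasis (Sum.inr (Sum.inr (Sum.inr (Sum.inl n)))) by
          rw [aeval_X']; simp [aBasis]; linear_combination (z1^n) * rel_1]
        exact smul_basis_mem _ _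
      · rw [show th2 * aBasis (Sum.inr (Sum.inr (Sum.inl n))) =
            aBasis (Sum.inr (Sum.inr (Sum.inr (Sum.inr (n+1))))) by
          simp [aBasis]; ring]
        exact basis_mem _
      · rw [show th2 * aBasis (Sum.inr (Sum.inr (Sum.inr (Sum.inl n)))) = 0 by
          simp [aBasis]; linear_combination (z1^n) * rel_3]
        exact Submodule.zero_mem _
      · rw [show th2 * aBasis (Sum.inr (Sum.inr (Sum.inr (Sum.inr n)))) = 0 by
          simp [aBasis]; linear_combination (z2^n) * rel_5]
        exact Submodule.zero_mem _

lemma span_top : Submodule.span (Polynomial ℂ) (Set.range aBasis) = ⊤ := by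
  rw [eq_top_iff]
  rintro x -
  obtain ⟨p, rfl⟩ := Ideal.Quotient.mk_surjective x
  induction p using MvPolynomial.induction_on with
  | C c =>
    have : Ideal.Quotient.mk nsIdeal (C c) = (Polynomial.C c : Polynomial ℂ) • (1 : ANode) := by
      rw [smul_eq', Polynomial.aeval_C, mul_one]
      rfl
    rw [this]
    exact Submodule.smul_mem _ _ (basis_mem (Sum.inl ()))
  | add p q hp hq =>
    rw [map_add]
    exact Submodule.add_mem _ hp hq
  | mul_X p i hp =>
    rw [map_mul, mul_comm]
    exact mul_gen_mem i _ hp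

/-- `A` is a free `ℂ[t]`-module with the indicated basis. -/
theorem ANode_free_over_Ct :
    LinearIndependent (Polynomial ℂ) aBasis ∧
      Submodule.span (Polynomial ℂ) (Set.range aBasis) = ⊤ := by
  exact ⟨aBasis_li, span_top⟩

end
end

section
/- Let A be a commutative ring and t ∈ A a nilpotent element. Let Ô = A[z₁,z₂,θ₁,θ₂]/(z₁z₂ + t², z₁θ₂ − tθ₁, z₂θ₁ + tθ₂, θ₁θ₂, θ₁², θ₂²), and let L = A[z, z⁻¹][ε]/(ε²) be the ring of dual numbers over Laurent polynomials in one variable over A. Then the A-algebra homomorphism γ : Ô → L × L determined by z₁ ↦ (z, −t²z⁻¹), z₂ ↦ (−t²z⁻¹, z), θ₁ ↦ (ε, −tz⁻¹ε), θ₂ ↦ (tz⁻¹ε, ε) is well defined and injective. -/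
set_option synthInstance.maxHeartbeats 1000000


/-!
STATEMENT 16. Let `A` be a commutative ring and `t ∈ A` nilpotent. Let
`Ô = A[z₁,z₂,θ₁,θ₂]/(z₁z₂ + t², z₁θ₂ − tθ₁, z₂θ₁ + tθ₂, θ₁θ₂, θ₁², θ₂²)` and
`L = A[z,z⁻¹][ε]/(ε²)` (realized as `A[z,w,ε]/(zw − 1, ε²)`). Then the `A`-algebra
map `γ : Ô → L × L` determined by `z₁ ↦ (z, −t²z⁻¹)`, `z₂ ↦ (−t²z⁻¹, z)`,
`θ₁ ↦ (ε, −tz⁻¹ε)`, `θ₂ ↦ (tz⁻¹ε, ε)` is well defined and injective.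
-/

open MvPolynomial

noncomputable section

/-- The relations `z₁z₂ + t², z₁θ₂ − tθ₁, z₂θ₁ + tθ₂, θ₁θ₂, θ₁², θ₂²` of the
deformation of the NS node with gluing parameter `t`; variables
`X 0 = z₁`, `X 1 = z₂`, `X 2 = θ₁`, `X 3 = θ₂`. -/
def nsDefIdeal (A : Type*) [CommRing A] (t : A) : Ideal (MvPolynomial (Fin 4) A) :=
  Ideal.span {X 0 * X 1 + C (t ^ 2), X 0 * X 3 - C t * X 2, X 1 * X 2 + C t * X 3,
    X 2 * X 3, X 2 ^ 2, X 3 ^ 2}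

/-- `Ô`, the coordinate ring of the deformation of the NS node over `A`. -/
abbrev Ohat (A : Type*) [CommRing A] (t : A) : Type _ :=
  MvPolynomial (Fin 4) A ⧸ nsDefIdeal A t

/-- The ideal `(zw − 1, ε²)` realizing `A[z,z⁻¹][ε]/(ε²)` as a quotient of `A[z,w,ε]`;
variables `X 0 = z`, `X 1 = w = z⁻¹`, `X 2 = ε`. -/
def ldIdeal (A : Type*) [CommRing A] : Ideal (MvPolynomial (Fin 3) A) :=
  Ideal.span {X 0 * X 1 - 1, X 2 ^ 2}

/-- The ring `L = A[z,z⁻¹][ε]/(ε²)`. -/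
abbrev LRing (A : Type*) [CommRing A] : Type _ := MvPolynomial (Fin 3) A ⧸ ldIdeal A

/-- `z ∈ L`. -/
def zL (A : Type*) [CommRing A] : LRing A := Ideal.Quotient.mk (ldIdeal A) (X 0)
/-- `z⁻¹ ∈ L`. -/
def zInv (A : Type*) [CommRing A] : LRing A := Ideal.Quotient.mk (ldIdeal A) (X 1)
/-- `ε ∈ L`. -/
def eps (A : Type*) [CommRing A] : LRing A := Ideal.Quotient.mk (ldIdeal A) (X 2)

section Laurent

open LaurentPolynomial

variable {A : Type*} [CommRing A]

/-! ### Coefficients of Laurent polynomials and a separation lemma -/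

def lcoeff (f : LaurentPolynomial A) (n : ℤ) : A := f.coeff n

lemma lcoeff_def (f : LaurentPolynomial A) (n : ℤ) : lcoeff f n = f.coeff n := rfl

/-- "nonpositively supported" Laurent polynomials. -/
def NP (f : LaurentPolynomial A) : Prop := ∀ n : ℤ, 0 < n → lcoeff f n = 0

lemma NP_add {f g : LaurentPolynomial A} (hf : NP f) (hg : NP g) : NP (f + g) := by
  intro n hn
  rw [lcoeff_def, AddMonoidAlgebra.coeff_add, Finsupp.add_apply, ← lcoeff_def, ← lcoeff_def, hf n hn, hg n hn, add_zero]

lemma NP_mul {f g : LaurentPolynomial A} (hf : NP f) (hg : NP g) : NP (f * g) := by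
  intro n hn
  rw [lcoeff_def, AddMonoidAlgebra.coeff_mul, Finsupp.sum]
  apply Finset.sum_eq_zero
  intro a₁ ha₁
  rw [Finsupp.sum]
  apply Finset.sum_eq_zero
  intro a₂ ha₂
  rw [if_neg]
  rintro rfl
  rcases lt_or_ge 0 a₁ with h | h
  · exact (Finsupp.mem_support_iff.mp ha₁) (hf _ h)
  rcases lt_or_ge 0 a₂ with h2 | h2
  · exact (Finsupp.mem_support_iff.mp ha₂) (hg _ h2)
  omega

lemma NP_algebraMap (a : A) : NP (algebraMap A (LaurentPolynomial A) a) := by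
  intro n hn
  have : algebraMap A (LaurentPolynomial A) a = LaurentPolynomial.C a := rfl
  rw [lcoeff_def, this, LaurentPolynomial.C_apply, if_neg (by omega)]

lemma NP_Tneg : NP (T (-1) : LaurentPolynomial A) := by
  intro n hn
  rw [lcoeff_def, LaurentPolynomial.T_apply, if_neg (by omega)]

lemma NP_aeval {x : LaurentPolynomial A} (hx : NP x) (p : Polynomial A) :
    NP (Polynomial.aeval x p) := by
  induction p using Polynomial.induction_on with
  | C a => rw [Polynomial.aeval_C]; exact NP_algebraMap a
  | add p q hp hq => rw [map_add]; exact NP_add hp hq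
  | monomial n a hp =>
      rw [pow_succ, ← mul_assoc, map_mul, Polynomial.aeval_X]
      exact NP_mul hp hx

lemma lcoeff_toLaurent_nat (p : Polynomial A) (n : ℕ) :
    lcoeff (Polynomial.toLaurent p) (n : ℤ) = p.coeff n := by
  rw [lcoeff_def, LaurentPolynomial.coeff_toLaurent]
  exact Finsupp.mapDomain_apply Nat.castEmbedding.injective p.toFinsupp.coeff n

/-- Separation: a genuine polynomial that equals a Laurent polynomial supported in
negative degrees must vanish. -/
lemma sep {p : Polynomial A} {g : LaurentPolynomial A} (hg : NP g)
    (h : Polynomial.toLaurent p + T (-1) * g = 0) : p = 0 := by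
  ext n
  have h2 : lcoeff (Polynomial.toLaurent p + T (-1) * g) (n : ℤ) = lcoeff 0 (n : ℤ) := by
    rw [h]
  have hT : (T (-1) : LaurentPolynomial A) = AddMonoidAlgebra.single (-1 : ℤ) (1 : A) := rfl
  rw [lcoeff_def, AddMonoidAlgebra.coeff_add, Finsupp.add_apply, hT, AddMonoidAlgebra.coeff_single_mul_apply, ← lcoeff_def,
    ← lcoeff_def, lcoeff_toLaurent_nat, hg _ (by omega), mul_zero, add_zero] at h2
  simpa [lcoeff_def] using h2

lemma aeval_T_one (p : Polynomial A) :
    Polynomial.aeval (T 1 : LaurentPolynomial A) p = Polynomial.toLaurent p := by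
  have : (Polynomial.aeval (T 1 : LaurentPolynomial A)) = Polynomial.toLaurentAlg :=
    Polynomial.algHom_ext (by simp [Polynomial.toLaurentAlg_apply, Polynomial.toLaurent_X])
  rw [this, Polynomial.toLaurentAlg_apply]

end Laurent

section Aux

variable {A : Type*} [CommRing A] (t : A)

/-! ### Normal forms in `Ohat` -/

def Z (i : Fin 4) : Ohat A t := Ideal.Quotient.mk (nsDefIdeal A t) (X i)

lemma mk_eq_zero {f : MvPolynomial (Fin 4) A}
    (hf : f ∈ ({X 0 * X 1 + C (t ^ 2), X 0 * X 3 - C t * X 2, X 1 * X 2 + C t * X 3,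
      X 2 * X 3, X 2 ^ 2, X 3 ^ 2} : Set (MvPolynomial (Fin 4) A))) :
    Ideal.Quotient.mk (nsDefIdeal A t) f = 0 :=
  Ideal.Quotient.eq_zero_iff_mem.2 (Ideal.subset_span hf)

lemma mk_C (a : A) :
    Ideal.Quotient.mk (nsDefIdeal A t) (C a) = algebraMap A (Ohat A t) a := rfl

local notation "tO" => algebraMap A (Ohat A t) t

lemma rel1 : Z (A := A) t 0 * Z t 1 = -(tO ^ 2) := by
  have := mk_eq_zero t (f := X 0 * X 1 + C (t ^ 2)) (by simp)
  rw [map_add, map_mul, mk_C, map_pow] at this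
  unfold Z
  linear_combination this

lemma rel2 : Z (A := A) t 0 * Z t 3 = tO * Z t 2 := by
  have := mk_eq_zero t (f := X 0 * X 3 - C t * X 2) (by simp)
  rw [map_sub, map_mul, map_mul, mk_C] at this
  unfold Z
  linear_combination this

lemma rel3 : Z (A := A) t 1 * Z t 2 = -(tO * Z t 3) := by
  have := mk_eq_zero t (f := X 1 * X 2 + C t * X 3) (by simp)
  rw [map_add, map_mul, map_mul, mk_C] at this
  unfold Z
  linear_combination this

lemma rel4 : Z (A := A) t 2 * Z t 3 = 0 := by
  have := mk_eq_zero t (f := X 2 * X 3) (by simp)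
  rw [map_mul] at this
  exact this

lemma rel5 : Z (A := A) t 2 * Z t 2 = 0 := by
  have := mk_eq_zero t (f := X 2 ^ 2) (by simp)
  rw [map_pow, pow_two] at this
  exact this

lemma rel6 : Z (A := A) t 3 * Z t 3 = 0 := by
  have := mk_eq_zero t (f := X 3 ^ 2) (by simp)
  rw [map_pow, pow_two] at this
  exact this

/-- normal form -/
def nf (a b c d : Polynomial A) : Ohat A t :=
  Polynomial.aeval (Z t 0) a + Z t 1 * Polynomial.aeval (Z t 1) b
    + Polynomial.aeval (Z t 0) c * Z t 2 + Polynomial.aeval (Z t 1) d * Z t 3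

lemma aeval_divX (i : Fin 4) (p : Polynomial A) :
    Polynomial.aeval (Z t i) p
      = Polynomial.aeval (Z t i) p.divX * Z t i + algebraMap A (Ohat A t) (p.coeff 0) := by
  conv_lhs => rw [← p.divX_mul_X_add]
  simp

lemma nf_add (a b c d a' b' c' d' : Polynomial A) :
    nf t a b c d + nf t a' b' c' d' = nf t (a + a') (b + b') (c + c') (d + d') := by
  simp only [nf, map_add]
  ring

lemma nf_mul_Z0 (a b c d : Polynomial A) :
    nf t a b c d * Z t 0
      = nf t (Polynomial.X * a - Polynomial.C (t ^ 2 * b.coeff 0)) (Polynomial.C (-(t^2)) * b.divX)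
          (Polynomial.X * c + Polynomial.C (t * d.coeff 0)) (Polynomial.C (-(t^2)) * d.divX) := by
  have hb := aeval_divX t 1 b
  have hd := aeval_divX t 1 d
  simp only [nf, map_add, map_sub, map_mul, map_neg, Polynomial.aeval_X, Polynomial.aeval_C,
    map_pow]
  linear_combination (Z t 0 * Z t 1) * hb + (Z t 0 * Z t 3) * hd
    + (Polynomial.aeval (Z t 1) b.divX * Z t 1 + algebraMap A (Ohat A t) (b.coeff 0)) * rel1 t
    + (Polynomial.aeval (Z t 1) d.divX * Z t 1 + algebraMap A (Ohat A t) (d.coeff 0)) * rel2 t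
    + (tO * Polynomial.aeval (Z t 1) d.divX) * rel3 t

lemma nf_mul_Z1 (a b c d : Polynomial A) :
    nf t a b c d * Z t 1
      = nf t (Polynomial.C (-(t^2)) * a.divX) (Polynomial.C (a.coeff 0) + Polynomial.X * b)
          (Polynomial.C (-(t^2)) * c.divX)
          (Polynomial.X * d - Polynomial.C (t * c.coeff 0)) := by
  have ha := aeval_divX t 0 a
  have hc := aeval_divX t 0 c
  simp only [nf, map_add, map_sub, map_mul, map_neg, Polynomial.aeval_X, Polynomial.aeval_C,
    map_pow]
  linear_combination (Z t 1) * ha + (Polynomial.aeval (Z t 0) a.divX) * rel1 t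
    + (Z t 1 * Z t 2) * hc
    + (Polynomial.aeval (Z t 0) c.divX * Z t 0 + algebraMap A (Ohat A t) (c.coeff 0)) * rel3 t
    + (-(algebraMap A (Ohat A t) t) * Polynomial.aeval (Z t 0) c.divX) * rel2 t

lemma nf_mul_Z2 (a b c d : Polynomial A) :
    nf t a b c d * Z t 2 = nf t 0 0 a (Polynomial.C (-t) * b) := by
  simp only [nf, map_add, map_mul, map_neg, Polynomial.aeval_X, Polynomial.aeval_C, map_zero]
  linear_combination (Polynomial.aeval (Z t 1) b) * rel3 t
    + (Polynomial.aeval (Z t 0) c) * rel5 t + (Polynomial.aeval (Z t 1) d) * rel4 t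

lemma nf_mul_Z3 (a b c d : Polynomial A) :
    nf t a b c d * Z t 3
      = nf t 0 0 (Polynomial.C t * a.divX) (Polynomial.X * b + Polynomial.C (a.coeff 0)) := by
  have ha := aeval_divX t 0 a
  simp only [nf, map_add, map_mul, Polynomial.aeval_X, Polynomial.aeval_C, map_zero]
  linear_combination (Z t 3) * ha + (Polynomial.aeval (Z t 0) a.divX) * rel2 t
    + (Polynomial.aeval (Z t 0) c) * rel4 t + (Polynomial.aeval (Z t 1) d) * rel6 t

lemma nf_surj (x : Ohat A t) : ∃ a b c d : Polynomial A, x = nf t a b c d := by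
  obtain ⟨f, rfl⟩ := Ideal.Quotient.mk_surjective x
  induction f using MvPolynomial.induction_on with
  | C a =>
      refine ⟨Polynomial.C a, 0, 0, 0, ?_⟩
      simp only [nf, map_zero, zero_mul, mul_zero, add_zero, Polynomial.aeval_C]
      exact mk_C t a
  | add p q hp hq =>
      obtain ⟨a, b, c, d, h1⟩ := hp
      obtain ⟨a', b', c', d', h2⟩ := hq
      exact ⟨a + a', b + b', c + c', d + d', by rw [map_add, h1, h2, nf_add]⟩
  | mul_X p i hp =>
      obtain ⟨a, b, c, d, h⟩ := hp
      have hx : Ideal.Quotient.mk (nsDefIdeal A t) (p * X i) = nf t a b c d * Z t i := by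
        rw [map_mul, h]; rfl
      fin_cases i
      · exact ⟨_, _, _, _, by rw [hx]; exact nf_mul_Z0 t a b c d⟩
      · exact ⟨_, _, _, _, by rw [hx]; exact nf_mul_Z1 t a b c d⟩
      · exact ⟨_, _, _, _, by rw [hx]; exact nf_mul_Z2 t a b c d⟩
      · exact ⟨_, _, _, _, by rw [hx]; exact nf_mul_Z3 t a b c d⟩

/-! ### Basic relations in `LRing` -/

lemma zw_one : zL A * zInv A = 1 := by
  have : Ideal.Quotient.mk (ldIdeal A) (X 0 * X 1 - 1) = 0 :=
    Ideal.Quotient.eq_zero_iff_mem.2 (Ideal.subset_span (by simp [ldIdeal]))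
  rw [map_sub, map_mul, map_one, sub_eq_zero] at this
  exact this

lemma eps_sq : eps A * eps A = 0 := by
  have : Ideal.Quotient.mk (ldIdeal A) ((X 2 : MvPolynomial (Fin 3) A) ^ 2) = 0 :=
    Ideal.Quotient.eq_zero_iff_mem.2 (Ideal.subset_span (by simp [ldIdeal]))
  rw [map_pow, pow_two] at this
  exact this

/-! ### The map to the dual numbers over Laurent polynomials -/

abbrev DL (A : Type*) [CommRing A] : Type _ :=
  TrivSqZeroExt (LaurentPolynomial A) (LaurentPolynomial A)

def psi0 : MvPolynomial (Fin 3) A →ₐ[A] DL A :=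
  MvPolynomial.aeval
    ![TrivSqZeroExt.inl (LaurentPolynomial.T 1), TrivSqZeroExt.inl (LaurentPolynomial.T (-1)),
      TrivSqZeroExt.inr 1]

lemma psi0_vanish : ∀ f ∈ ldIdeal A, (psi0 : MvPolynomial (Fin 3) A →ₐ[A] DL A) f = 0 := by
  intro f hf
  have hle : ldIdeal A ≤ RingHom.ker (psi0 (A := A)).toRingHom := by
    rw [ldIdeal, Ideal.span_le]
    rintro g hg
    simp only [Set.mem_insert_iff, Set.mem_singleton_iff] at hg
    rcases hg with rfl | rfl
    · show psi0 (X 0 * X 1 - 1) = 0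
      rw [map_sub, map_mul, map_one]
      have h0 : psi0 (A := A) (X 0) = TrivSqZeroExt.inl (LaurentPolynomial.T 1) := by
        simp [psi0]
      have h1 : psi0 (A := A) (X 1) = TrivSqZeroExt.inl (LaurentPolynomial.T (-1)) := by
        simp [psi0]
      rw [h0, h1, TrivSqZeroExt.inl_mul_inl, ← LaurentPolynomial.T_add]
      norm_num [LaurentPolynomial.T_zero, sub_eq_zero]
    · show psi0 ((X 2 : MvPolynomial (Fin 3) A) ^ 2) = 0
      have h2 : psi0 (A := A) (X 2) = TrivSqZeroExt.inr 1 := by simp [psi0]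
      rw [map_pow, h2, pow_two, TrivSqZeroExt.inr_mul_inr]
  exact hle hf

def psiL : LRing A →ₐ[A] DL A :=
  Ideal.Quotient.liftₐ (ldIdeal A) psi0 psi0_vanish

lemma psiL_z : psiL (zL A) = TrivSqZeroExt.inl (LaurentPolynomial.T 1) := by
  rw [zL, psiL, Ideal.Quotient.liftₐ_apply]
  erw [Ideal.Quotient.lift_mk]
  simp [psi0]

lemma psiL_zInv : psiL (zInv A) = TrivSqZeroExt.inl (LaurentPolynomial.T (-1)) := by
  rw [zInv, psiL, Ideal.Quotient.liftₐ_apply]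
  erw [Ideal.Quotient.lift_mk]
  simp [psi0]

lemma psiL_eps : psiL (eps A) = TrivSqZeroExt.inr 1 := by
  rw [eps, psiL, Ideal.Quotient.liftₐ_apply]
  erw [Ideal.Quotient.lift_mk]
  simp [psi0]

lemma aeval_inl (x : LaurentPolynomial A) (p : Polynomial A) :
    Polynomial.aeval (TrivSqZeroExt.inl x : DL A) p
      = TrivSqZeroExt.inl (Polynomial.aeval x p) :=
  Polynomial.aeval_algHom_apply
    (TrivSqZeroExt.inlAlgHom A (LaurentPolynomial A) (LaurentPolynomial A)) x p

end Aux

section Main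

variable {A : Type*} [CommRing A] (t : A)

local notation "τ" => algebraMap A (LaurentPolynomial A) t

def uN : LaurentPolynomial A := -(algebraMap A (LaurentPolynomial A) t ^ 2)
  * LaurentPolynomial.T (-1)

lemma NP_uN : NP (uN t (A := A)) := by
  have : uN t (A := A) = algebraMap A (LaurentPolynomial A) (-(t ^ 2))
      * LaurentPolynomial.T (-1) := by
    rw [map_neg, map_pow, uN]
  rw [this]
  exact NP_mul (NP_algebraMap _) NP_Tneg

/-- the map from the polynomial ring to `L × L` -/
def phi : MvPolynomial (Fin 4) A →ₐ[A] LRing A × LRing A :=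
  MvPolynomial.aeval
    ![(zL A, -(algebraMap A (LRing A) t ^ 2 * zInv A)),
      (-(algebraMap A (LRing A) t ^ 2 * zInv A), zL A),
      (eps A, -(algebraMap A (LRing A) t * zInv A * eps A)),
      (algebraMap A (LRing A) t * zInv A * eps A, eps A)]

lemma phi_X0 : phi t (X 0) = (zL A, -(algebraMap A (LRing A) t ^ 2 * zInv A)) := by
  simp [phi]

lemma phi_X1 : phi t (X 1) = (-(algebraMap A (LRing A) t ^ 2 * zInv A), zL A) := by
  simp [phi]

lemma phi_X2 : phi t (X 2) = (eps A, -(algebraMap A (LRing A) t * zInv A * eps A)) := by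
  simp [phi]

lemma phi_X3 : phi t (X 3) = (algebraMap A (LRing A) t * zInv A * eps A, eps A) := by
  simp [phi]

lemma phi_vanish : ∀ f ∈ nsDefIdeal A t, phi t f = 0 := by
  intro f hf
  have hle : nsDefIdeal A t ≤ RingHom.ker (phi t).toRingHom := by
    rw [nsDefIdeal, Ideal.span_le]
    rintro g hg
    simp only [Set.mem_insert_iff, Set.mem_singleton_iff] at hg
    have hz := zw_one (A := A)
    have he := eps_sq (A := A)
    have hC : ∀ a : A, (phi t) (C a) = (algebraMap A (LRing A) a, algebraMap A (LRing A) a) := by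
      intro a
      rw [show ((C a : MvPolynomial (Fin 4) A)) = algebraMap A _ a from rfl, AlgHom.commutes]
      rfl
    rcases hg with rfl | rfl | rfl | rfl | rfl | rfl <;>
      show phi t _ = 0
    · rw [map_add, map_mul, phi_X0, phi_X1, hC]
      refine Prod.ext ?_ ?_ <;>
        simp only [Prod.fst_mul, Prod.snd_mul, Prod.fst_add, Prod.snd_add, Prod.fst_zero,
          Prod.snd_zero, map_pow]
      · linear_combination (-(algebraMap A (LRing A) t ^ 2)) * hz
      · linear_combination (-(algebraMap A (LRing A) t ^ 2)) * hz
    · rw [map_sub, map_mul, map_mul, phi_X0, phi_X3, phi_X2, hC]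
      refine Prod.ext ?_ ?_ <;>
        simp only [Prod.fst_mul, Prod.snd_mul, Prod.fst_sub, Prod.snd_sub, Prod.fst_zero,
          Prod.snd_zero]
      · linear_combination (algebraMap A (LRing A) t * eps A) * hz
      · ring
    · rw [map_add, map_mul, map_mul, phi_X1, phi_X2, phi_X3, hC]
      refine Prod.ext ?_ ?_ <;>
        simp only [Prod.fst_mul, Prod.snd_mul, Prod.fst_add, Prod.snd_add, Prod.fst_zero,
          Prod.snd_zero]
      · ring
      · linear_combination (-(algebraMap A (LRing A) t * eps A)) * hz
    · rw [map_mul, phi_X2, phi_X3]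
      refine Prod.ext ?_ ?_ <;>
        simp only [Prod.fst_mul, Prod.snd_mul, Prod.fst_zero, Prod.snd_zero]
      · linear_combination (algebraMap A (LRing A) t * zInv A) * he
      · linear_combination (-(algebraMap A (LRing A) t * zInv A)) * he
    · rw [map_pow, phi_X2, pow_two]
      refine Prod.ext ?_ ?_ <;>
        simp only [Prod.fst_mul, Prod.snd_mul, Prod.fst_zero, Prod.snd_zero]
      · exact he
      · linear_combination (algebraMap A (LRing A) t ^ 2 * zInv A * zInv A) * he
    · rw [map_pow, phi_X3, pow_two]
      refine Prod.ext ?_ ?_ <;>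
        simp only [Prod.fst_mul, Prod.snd_mul, Prod.fst_zero, Prod.snd_zero]
      · linear_combination (algebraMap A (LRing A) t ^ 2 * zInv A * zInv A) * he
      · exact he
  exact hle hf

/-- the branch-restriction map -/
def gam : Ohat A t →ₐ[A] LRing A × LRing A :=
  Ideal.Quotient.liftₐ (nsDefIdeal A t) (phi t) (phi_vanish t)

lemma gam_mk (f : MvPolynomial (Fin 4) A) :
    gam t (Ideal.Quotient.mk (nsDefIdeal A t) f) = phi t f := by
  rw [gam, Ideal.Quotient.liftₐ_apply]
  erw [Ideal.Quotient.lift_mk]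

lemma uN_eq : uN t (A := A) = algebraMap A (LaurentPolynomial A) (-(t ^ 2))
    * LaurentPolynomial.T (-1) := by
  rw [uN, map_neg, map_pow]

/-- first branch composite `Ohat → DL` -/
def E1 : Ohat A t →ₐ[A] DL A :=
  (psiL (A := A)).comp ((AlgHom.fst A (LRing A) (LRing A)).comp (gam t))

/-- second branch composite `Ohat → DL` -/
def E2 : Ohat A t →ₐ[A] DL A :=
  (psiL (A := A)).comp ((AlgHom.snd A (LRing A) (LRing A)).comp (gam t))

lemma E1_Z0 : E1 t (Z (A := A) t 0) = TrivSqZeroExt.inl (LaurentPolynomial.T 1) := by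
  rw [E1, AlgHom.comp_apply, AlgHom.comp_apply, Z, gam_mk, phi_X0]
  exact psiL_z

lemma inl_alg (x : A) :
    algebraMap A (DL A) x = TrivSqZeroExt.inl (algebraMap A (LaurentPolynomial A) x) :=
  ((TrivSqZeroExt.inlAlgHom A (LaurentPolynomial A) (LaurentPolynomial A)).commutes x).symm

lemma E1_Z1 : E1 t (Z (A := A) t 1) = TrivSqZeroExt.inl (uN t) := by
  rw [E1, AlgHom.comp_apply, AlgHom.comp_apply, Z, gam_mk, phi_X1]
  show psiL (-(algebraMap A (LRing A) t ^ 2 * zInv A)) = _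
  rw [map_neg, map_mul, map_pow, AlgHom.commutes, psiL_zInv, inl_alg, uN]
  refine TrivSqZeroExt.ext ?_ ?_ <;>
    simp [TrivSqZeroExt.fst_mul, TrivSqZeroExt.snd_mul]

lemma E1_Z2 : E1 t (Z (A := A) t 2) = TrivSqZeroExt.inr 1 := by
  rw [E1, AlgHom.comp_apply, AlgHom.comp_apply, Z, gam_mk, phi_X2]
  exact psiL_eps

lemma E1_Z3 : E1 t (Z (A := A) t 3)
    = TrivSqZeroExt.inr (algebraMap A (LaurentPolynomial A) t * LaurentPolynomial.T (-1)) := by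
  rw [E1, AlgHom.comp_apply, AlgHom.comp_apply, Z, gam_mk, phi_X3]
  show psiL (algebraMap A (LRing A) t * zInv A * eps A) = _
  rw [map_mul, map_mul, AlgHom.commutes, psiL_zInv, psiL_eps, inl_alg,
    TrivSqZeroExt.inl_mul_inl, TrivSqZeroExt.inl_mul_inr, smul_eq_mul, mul_one]

lemma E2_Z0 : E2 t (Z (A := A) t 0) = TrivSqZeroExt.inl (uN t) := by
  rw [E2, AlgHom.comp_apply, AlgHom.comp_apply, Z, gam_mk, phi_X0]
  show psiL (-(algebraMap A (LRing A) t ^ 2 * zInv A)) = _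
  rw [map_neg, map_mul, map_pow, AlgHom.commutes, psiL_zInv, inl_alg, uN]
  refine TrivSqZeroExt.ext ?_ ?_ <;>
    simp [TrivSqZeroExt.fst_mul, TrivSqZeroExt.snd_mul]

lemma E2_Z1 : E2 t (Z (A := A) t 1) = TrivSqZeroExt.inl (LaurentPolynomial.T 1) := by
  rw [E2, AlgHom.comp_apply, AlgHom.comp_apply, Z, gam_mk, phi_X1]
  exact psiL_z

lemma E2_Z2 : E2 t (Z (A := A) t 2)
    = TrivSqZeroExt.inr
        (-(algebraMap A (LaurentPolynomial A) t * LaurentPolynomial.T (-1))) := by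
  rw [E2, AlgHom.comp_apply, AlgHom.comp_apply, Z, gam_mk, phi_X2]
  show psiL (-(algebraMap A (LRing A) t * zInv A * eps A)) = _
  rw [map_neg, map_mul, map_mul, AlgHom.commutes, psiL_zInv, psiL_eps, inl_alg,
    TrivSqZeroExt.inl_mul_inl, TrivSqZeroExt.inl_mul_inr, smul_eq_mul, mul_one,
    TrivSqZeroExt.inr_neg]

lemma E2_Z3 : E2 t (Z (A := A) t 3) = TrivSqZeroExt.inr 1 := by
  rw [E2, AlgHom.comp_apply, AlgHom.comp_apply, Z, gam_mk, phi_X3]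
  exact psiL_eps

local notation "TT" => (LaurentPolynomial.T 1 : LaurentPolynomial A)

lemma E1_nf (a b c d : Polynomial A) :
    E1 t (nf t a b c d)
      = TrivSqZeroExt.inl (Polynomial.aeval TT a + uN t * Polynomial.aeval (uN t) b)
        + TrivSqZeroExt.inr (Polynomial.aeval TT c
            + (algebraMap A (LaurentPolynomial A) t * LaurentPolynomial.T (-1))
              * Polynomial.aeval (uN t) d) := by
  rw [nf, map_add, map_add, map_add, map_mul, map_mul, map_mul,
    ← Polynomial.aeval_algHom_apply, ← Polynomial.aeval_algHom_apply,
    ← Polynomial.aeval_algHom_apply, ← Polynomial.aeval_algHom_apply,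
    E1_Z0, E1_Z1, E1_Z2, E1_Z3, aeval_inl, aeval_inl, aeval_inl, aeval_inl]
  refine TrivSqZeroExt.ext ?_ ?_ <;>
    simp only [TrivSqZeroExt.fst_add, TrivSqZeroExt.snd_add, TrivSqZeroExt.fst_mul,
      TrivSqZeroExt.snd_mul, TrivSqZeroExt.fst_inl, TrivSqZeroExt.snd_inl,
      TrivSqZeroExt.fst_inr, TrivSqZeroExt.snd_inr, smul_eq_mul, smul_zero, mul_zero,
      zero_mul, add_zero, zero_add, mul_one, op_smul_eq_mul] <;> ring

lemma E2_nf (a b c d : Polynomial A) :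
    E2 t (nf t a b c d)
      = TrivSqZeroExt.inl (Polynomial.aeval (uN t) a + TT * Polynomial.aeval TT b)
        + TrivSqZeroExt.inr (Polynomial.aeval TT d
            - (algebraMap A (LaurentPolynomial A) t * LaurentPolynomial.T (-1))
              * Polynomial.aeval (uN t) c) := by
  rw [nf, map_add, map_add, map_add, map_mul, map_mul, map_mul,
    ← Polynomial.aeval_algHom_apply, ← Polynomial.aeval_algHom_apply,
    ← Polynomial.aeval_algHom_apply, ← Polynomial.aeval_algHom_apply,
    E2_Z0, E2_Z1, E2_Z2, E2_Z3, aeval_inl, aeval_inl, aeval_inl, aeval_inl]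
  refine TrivSqZeroExt.ext ?_ ?_ <;>
    simp only [TrivSqZeroExt.fst_add, TrivSqZeroExt.snd_add, TrivSqZeroExt.fst_mul,
      TrivSqZeroExt.snd_mul, TrivSqZeroExt.fst_inl, TrivSqZeroExt.snd_inl,
      TrivSqZeroExt.fst_inr, TrivSqZeroExt.snd_inr, smul_eq_mul, smul_zero, mul_zero,
      zero_mul, add_zero, zero_add, mul_one, op_smul_eq_mul] <;> ring

end Main

theorem nsNode_branch_restriction_injective (A : Type*) [CommRing A] (t : A)
    (ht : IsNilpotent t) :
    ∃ γ : Ohat A t →ₐ[A] LRing A × LRing A,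
      γ (Ideal.Quotient.mk (nsDefIdeal A t) (X 0)) =
        (zL A, -(algebraMap A (LRing A) t ^ 2 * zInv A)) ∧
      γ (Ideal.Quotient.mk (nsDefIdeal A t) (X 1)) =
        (-(algebraMap A (LRing A) t ^ 2 * zInv A), zL A) ∧
      γ (Ideal.Quotient.mk (nsDefIdeal A t) (X 2)) =
        (eps A, -(algebraMap A (LRing A) t * zInv A * eps A)) ∧
      γ (Ideal.Quotient.mk (nsDefIdeal A t) (X 3)) =
        (algebraMap A (LRing A) t * zInv A * eps A, eps A) ∧
      Function.Injective γ := by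
  refine ⟨gam t, by rw [gam_mk]; exact phi_X0 t, by rw [gam_mk]; exact phi_X1 t,
    by rw [gam_mk]; exact phi_X2 t, by rw [gam_mk]; exact phi_X3 t, ?_⟩
  rw [injective_iff_map_eq_zero]
  intro x hx
  obtain ⟨a, b, c, d, rfl⟩ := nf_surj t x
  have h1 : E1 t (nf t a b c d) = 0 := by
    rw [E1, AlgHom.comp_apply, AlgHom.comp_apply, hx, map_zero, map_zero]
  have h2 : E2 t (nf t a b c d) = 0 := by
    rw [E2, AlgHom.comp_apply, AlgHom.comp_apply, hx, map_zero, map_zero]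
  rw [E1_nf] at h1
  rw [E2_nf] at h2
  have eA : Polynomial.aeval (LaurentPolynomial.T 1 : LaurentPolynomial A) a
      + uN t * Polynomial.aeval (uN t) b = 0 := by
    have := congrArg TrivSqZeroExt.fst h1
    simpa using this
  have eC : Polynomial.aeval (LaurentPolynomial.T 1 : LaurentPolynomial A) c
      + algebraMap A (LaurentPolynomial A) t * LaurentPolynomial.T (-1)
        * Polynomial.aeval (uN t) d = 0 := by
    have := congrArg TrivSqZeroExt.snd h1
    simpa using this
  have eB : Polynomial.aeval (uN t) a
      + (LaurentPolynomial.T 1 : LaurentPolynomial A)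
        * Polynomial.aeval (LaurentPolynomial.T 1 : LaurentPolynomial A) b = 0 := by
    have := congrArg TrivSqZeroExt.fst h2
    simpa using this
  have eD : Polynomial.aeval (LaurentPolynomial.T 1 : LaurentPolynomial A) d
      - algebraMap A (LaurentPolynomial A) t * LaurentPolynomial.T (-1)
        * Polynomial.aeval (uN t) c = 0 := by
    have := congrArg TrivSqZeroExt.snd h2
    simpa using this
  have hu := uN_eq t (A := A)
  have ha : a = 0 := by
    apply sep (g := algebraMap A (LaurentPolynomial A) (-(t ^ 2)) * Polynomial.aeval (uN t) b)
      (NP_mul (NP_algebraMap _) (NP_aeval (NP_uN t) b))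
    rw [← aeval_T_one]
    linear_combination eA - (Polynomial.aeval (uN t) b) * hu
  have hc : c = 0 := by
    apply sep (g := algebraMap A (LaurentPolynomial A) t * Polynomial.aeval (uN t) d)
      (NP_mul (NP_algebraMap _) (NP_aeval (NP_uN t) d))
    rw [← aeval_T_one]
    linear_combination eC
  have hb : b = 0 := by
    rw [ha, map_zero, zero_add] at eB
    have h3 : (LaurentPolynomial.T (-1) : LaurentPolynomial A)
        * ((LaurentPolynomial.T 1 : LaurentPolynomial A)
          * Polynomial.aeval (LaurentPolynomial.T 1 : LaurentPolynomial A) b) = 0 := by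
      rw [eB, mul_zero]
    rw [← mul_assoc, ← LaurentPolynomial.T_add, neg_add_cancel, LaurentPolynomial.T_zero,
      one_mul, aeval_T_one] at h3
    exact Polynomial.toLaurent_eq_zero.mp h3
  have hd : d = 0 := by
    rw [hc, map_zero, mul_zero, sub_zero, aeval_T_one] at eD
    exact Polynomial.toLaurent_eq_zero.mp eD
  rw [ha, hb, hc, hd]
  simp [nf]

end
end
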